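/- Let L > 0, let ς_Ne > 0 and ς_Di > 0 be real numbers, and let λ ∈ ℂ be such that the polynomial P_λ(μ) = μ³ + μ + λ has a root of multiplicity at least two (i.e., there exists μ₀ ∈ ℂ with μ₀³ + μ₀ + λ = 0 and 3μ₀² + 1 = 0). Suppose φ₁, φ₂ : ℝ → ℂ both satisfy the KdV spectral ODE with parameter λ on [0,L], and satisfy the boundary conditions φ₂(0) = φ₁(0), ς_Ne·φ₁''(0) + ς_Di·φ₂''(0) = 0, φ₁(L) = φ₂(L) = 0, φ₁'(0) = φ₂'(0) = 0, φ₁'(L) = 0, and φ₂''(L) = 0. Then φ₁(x) = 0 and φ₂(x) = 0 for all x ∈ [0,L]. -/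

import Mathlib

/-- A function `φ : ℝ → ℂ` satisfies the KdV spectral ODE with parameter `lam` on `[0, L]`:
it is three times continuously differentiable and `lam·φ + φ' + φ''' = 0` on `[0, L]`. -/
def KdVSpectralODE (lam : ℂ) (L : ℝ) (φ : ℝ → ℂ) : Prop :=
  ContDiff ℝ 3 φ ∧
    ∀ x ∈ Set.Icc (0 : ℝ) L, lam * φ x + deriv φ x + iteratedDeriv 3 φ x = 0

namespace KdVAux

open Set Complex

noncomputable section

lemma hasDerivAt_cexpc (c : ℂ) (x : ℝ) :
    HasDerivAt (fun y : ℝ => Complex.exp (c * y)) (c * Complex.exp (c * x)) x := by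
  have h1 : HasDerivAt (fun z : ℂ => Complex.exp (c * z)) (c * Complex.exp (c * x)) (x : ℂ) := by
    simpa [mul_comm] using ((hasDerivAt_id (x:ℂ)).const_mul c).cexp
  exact h1.comp_ofReal

lemma hasDerivAt_ofReal' (x : ℝ) : HasDerivAt (fun y : ℝ => (y : ℂ)) 1 x :=
  (hasDerivAt_id (x:ℂ)).comp_ofReal

/-- Explicit solution with initial data `(0, 0, 1)`. -/
def W (μ : ℂ) (x : ℝ) : ℂ :=
  (1/3 - μ * x) * Complex.exp (μ * x) - (1/3) * Complex.exp (-2 * μ * x)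

def W1 (μ : ℂ) (x : ℝ) : ℂ :=
  (-2*μ/3 + x/3) * Complex.exp (μ * x) + (2*μ/3) * Complex.exp (-2 * μ * x)

def W2 (μ : ℂ) (x : ℝ) : ℂ :=
  (5/9 + μ*x/3) * Complex.exp (μ * x) + (4/9) * Complex.exp (-2 * μ * x)

variable {μ lam : ℂ}

lemma hW (hμ : 3*μ^2 + 1 = 0) (x : ℝ) : HasDerivAt (W μ) (W1 μ x) x := by
  have e1 := hasDerivAt_cexpc μ x
  have e2 := hasDerivAt_cexpc (-2*μ) x
  have a1 : HasDerivAt (fun y : ℝ => 1/3 - μ * (y:ℂ)) (-μ) x := by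
    simpa using ((hasDerivAt_ofReal' x).const_mul μ).const_sub (1/3 : ℂ)
  have h := (a1.mul e1).sub (e2.const_mul ((1:ℂ)/3))
  refine h.congr_deriv (Eq.symm ?_)
  unfold W1
  linear_combination ((x:ℂ)/3 * Complex.exp (μ*↑x)) * hμ

lemma hW1 (hμ : 3*μ^2 + 1 = 0) (x : ℝ) : HasDerivAt (W1 μ) (W2 μ x) x := by
  have e1 := hasDerivAt_cexpc μ x
  have e2 := hasDerivAt_cexpc (-2*μ) x
  have a1 : HasDerivAt (fun y : ℝ => -2*μ/3 + (y:ℂ)/3) (1/3) x := by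
    simpa using ((hasDerivAt_ofReal' x).div_const 3).const_add (-2*μ/3 : ℂ)
  have h := (a1.mul e1).add (e2.const_mul (2*μ/3 : ℂ))
  refine h.congr_deriv (Eq.symm ?_)
  unfold W2
  linear_combination ((2:ℂ)/9 * Complex.exp (μ*↑x) + (4:ℂ)/9 * Complex.exp (-2*μ*↑x)) * hμ

lemma hW2 (hμ : 3*μ^2 + 1 = 0) (hlam : μ^3 + μ + lam = 0) (x : ℝ) :
    HasDerivAt (W2 μ) (-lam * W μ x - W1 μ x) x := by
  have e1 := hasDerivAt_cexpc μ x
  have e2 := hasDerivAt_cexpc (-2*μ) x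
  have a1 : HasDerivAt (fun y : ℝ => 5/9 + μ*(y:ℂ)/3) (μ/3) x := by
    simpa using (((hasDerivAt_ofReal' x).const_mul μ).div_const 3).const_add (5/9 : ℂ)
  have h := (a1.mul e1).add (e2.const_mul ((4:ℂ)/9))
  refine h.congr_deriv (Eq.symm ?_)
  unfold W W1
  linear_combination ((μ/9 - (x:ℂ)/3*(μ^2+1)) * Complex.exp (μ*↑x) - μ/9 * Complex.exp (-2*μ*↑x)) * hμ + ((-1/3 + μ*(x:ℂ)) * Complex.exp (μ*↑x) + (1:ℂ)/3 * Complex.exp (-2*μ*↑x)) * hlam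

lemma lipsch (lam : ℂ) (t : ℝ) :
    LipschitzWith (‖lam‖₊ + 1) (fun u : ℂ × ℂ × ℂ => (u.2.1, u.2.2, -lam * u.1 - u.2.1)) := by
  apply LipschitzWith.of_dist_le_mul
  intro u u'
  have hK : ((‖lam‖₊ + 1 : NNReal) : ℝ) = ‖lam‖ + 1 := by push_cast; rfl
  rw [Prod.dist_eq, Prod.dist_eq, hK]
  have h1 : dist u.1 u'.1 ≤ dist u u' := by
    rw [Prod.dist_eq]; exact le_max_left _ _
  have h21 : dist u.2.1 u'.2.1 ≤ dist u u' := by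
    rw [Prod.dist_eq, Prod.dist_eq]; exact le_trans (le_max_left _ _) (le_max_right _ _)
  have h22 : dist u.2.2 u'.2.2 ≤ dist u u' := by
    rw [Prod.dist_eq, Prod.dist_eq]; exact le_trans (le_max_right _ _) (le_max_right _ _)
  have hd : (0:ℝ) ≤ dist u u' := dist_nonneg
  have hl : (0:ℝ) ≤ ‖lam‖ := norm_nonneg _
  apply max_le
  · simp only []
    nlinarith
  · apply max_le
    · nlinarith
    · have : dist (-lam * u.1 - u.2.1) (-lam * u'.1 - u'.2.1)
          ≤ ‖lam‖ * dist u.1 u'.1 + dist u.2.1 u'.2.1 := by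
        rw [dist_eq_norm, dist_eq_norm, dist_eq_norm]
        have e : -lam * u.1 - u.2.1 - (-lam * u'.1 - u'.2.1)
            = (-lam) * (u.1 - u'.1) - (u.2.1 - u'.2.1) := by ring
        rw [e]
        refine le_trans (norm_sub_le _ _) ?_
        rw [norm_mul, norm_neg]
      nlinarith

lemma reprW (hμ : 3*μ^2 + 1 = 0) (hlam : μ^3 + μ + lam = 0) {L : ℝ}
    (φ : ℝ → ℂ) (h : KdVSpectralODE lam L φ) (h0 : φ 0 = 0) (h0' : deriv φ 0 = 0) :
    ∀ x ∈ Icc (0:ℝ) L, φ x = iteratedDeriv 2 φ 0 * W μ x := by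
  obtain ⟨hsm, hode⟩ := h
  have h3 : ContDiff ℝ ((2:ℕ) + 1) φ := by exact_mod_cast hsm
  rw [contDiff_succ_iff_deriv] at h3
  have h2 : ContDiff ℝ ((1:ℕ) + 1) (deriv φ) := by exact_mod_cast h3.2.2
  rw [contDiff_succ_iff_deriv] at h2
  have h1 : ContDiff ℝ ((0:ℕ) + 1) (deriv (deriv φ)) := by exact_mod_cast h2.2.2
  rw [contDiff_succ_iff_deriv] at h1
  have hdφ : Differentiable ℝ φ := h3.1
  have hd1 : Differentiable ℝ (deriv φ) := h2.1
  have hd2 : Differentiable ℝ (deriv (deriv φ)) := h1.1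
  have hiter2 : iteratedDeriv 2 φ = deriv (deriv φ) := by
    rw [show (2:ℕ) = 1 + 1 from rfl, iteratedDeriv_succ, iteratedDeriv_one]
  have hiter3 : iteratedDeriv 3 φ = deriv (deriv (deriv φ)) := by
    rw [show (3:ℕ) = 2 + 1 from rfl, iteratedDeriv_succ, hiter2]
  set q := iteratedDeriv 2 φ 0 with hq
  set f : ℝ → ℂ × ℂ × ℂ := fun x => (φ x, deriv φ x, deriv (deriv φ) x) with hf
  set g : ℝ → ℂ × ℂ × ℂ := fun x => (q * W μ x, q * W1 μ x, q * W2 μ x) with hg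
  have key : EqOn f g (Icc 0 L) := by
    apply ODE_solution_unique (v := fun _ u => (u.2.1, u.2.2, -lam * u.1 - u.2.1)) (lipsch lam)
    · exact ((hdφ.continuous.prodMk (hd1.continuous.prodMk hd2.continuous))).continuousOn
    · intro t ht
      have hode' := hode t ⟨ht.1, ht.2.le⟩
      have hval : deriv (deriv (deriv φ)) t = -lam * φ t - deriv φ t := by
        rw [hiter3] at hode'; linear_combination hode'
      have : HasDerivAt f (deriv φ t, deriv (deriv φ) t, -lam * φ t - deriv φ t) t := by
        refine HasDerivAt.prodMk ((hdφ t).hasDerivAt) (HasDerivAt.prodMk ((hd1 t).hasDerivAt) ?_)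
        rw [← hval]; exact (hd2 t).hasDerivAt
      exact this.hasDerivWithinAt
    · have hc : Continuous g := by
        refine Continuous.prodMk ?_ (Continuous.prodMk ?_ ?_) <;>
          exact continuous_const.mul
            (Differentiable.continuous (fun x => HasDerivAt.differentiableAt (by
              first
              | exact hW hμ x
              | exact hW1 hμ x
              | exact hW2 hμ hlam x)))
      exact hc.continuousOn
    · intro t ht
      have : HasDerivAt g (q * W1 μ t, q * W2 μ t, -lam * (q * W μ t) - q * W1 μ t) t := by
        refine HasDerivAt.prodMk ((hW hμ t).const_mul q) (HasDerivAt.prodMk ((hW1 hμ t).const_mul q) ?_)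
        have := (hW2 hμ hlam t).const_mul q
        exact this.congr_deriv (by ring)
      exact this.hasDerivWithinAt
    · show f 0 = g 0
      have hW0 : W μ 0 = 0 := by simp [W]
      have hW10 : W1 μ 0 = 0 := by simp [W1]; ring_nf
      have hW20 : W2 μ 0 = 1 := by simp [W2]; norm_num
      simp [hf, hg, h0, h0', hW0, hW10, hW20, ← hiter2]
      exact hq.symm
  intro x hx
  have := congrArg Prod.fst (key hx)
  simpa using this

lemma mu_re_im (hμ : 3*μ^2 + 1 = 0) : μ.re = 0 ∧ μ.im^2 = 1/3 := by
  have h := hμ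
  rw [Complex.ext_iff] at h
  simp [pow_two, Complex.mul_re, Complex.mul_im] at h
  obtain ⟨h1, h2⟩ := h
  have him : μ.im ≠ 0 := by
    intro h0; rw [h0] at h1; nlinarith [sq_nonneg μ.re]
  have hre : μ.re = 0 := by
    have h2' : μ.re * μ.im = 0 := by linarith
    rcases mul_eq_zero.1 h2' with h | h
    · exact h
    · exact absurd h him
  refine ⟨hre, by nlinarith⟩

lemma WL_ne (hμ : 3*μ^2 + 1 = 0) {L : ℝ} (hL : 0 < L) : W μ L ≠ 0 := by
  obtain ⟨hre, him2⟩ := mu_re_im hμ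
  intro h
  have h2 : (1 - 3*μ*L) * Complex.exp (μ*L) = Complex.exp (-2*μ*L) := by
    unfold W at h; linear_combination 3*h
  have habs := congrArg norm h2
  rw [norm_mul, Complex.norm_exp, Complex.norm_exp] at habs
  have hre1 : (μ * (L:ℂ)).re = 0 := by simp [Complex.mul_re, hre]
  have hre2 : (-2*μ * (L:ℂ)).re = 0 := by simp [Complex.mul_re, Complex.mul_im, hre]
  rw [hre1, hre2, Real.exp_zero, mul_one] at habs
  have hsq := congrArg (· ^ 2) habs
  simp only [Complex.sq_norm, one_pow] at hsq
  rw [Complex.normSq_apply] at hsq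
  simp [Complex.mul_re, Complex.mul_im, hre] at hsq
  rcases hsq with h0 | h0
  · rw [h0] at him2; norm_num at him2
  · exact absurd h0 hL.ne'

lemma hasDerivAt_mulconj {f g : ℝ → ℂ} {f' g' : ℂ} {x : ℝ}
    (hf : HasDerivAt f f' x) (hg : HasDerivAt g g' x) :
    HasDerivAt (fun y => (f y * (starRingEnd ℂ) (g y)).re)
      ((f' * (starRingEnd ℂ) (g x) + f x * (starRingEnd ℂ) g').re) x := by
  have h := hf.mul hg.star
  have h2 := Complex.reCLM.hasFDerivAt.comp_hasDerivAt x h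
  exact h2

lemma energy (hre : lam.re = 0) {L : ℝ} (hL : 0 ≤ L) (φ : ℝ → ℂ)
    (h : KdVSpectralODE lam L φ) :
    (φ L * (starRingEnd ℂ) (φ L)).re - (deriv φ L * (starRingEnd ℂ) (deriv φ L)).re
      + 2*((iteratedDeriv 2 φ L) * (starRingEnd ℂ) (φ L)).re
    = (φ 0 * (starRingEnd ℂ) (φ 0)).re - (deriv φ 0 * (starRingEnd ℂ) (deriv φ 0)).re
      + 2*((iteratedDeriv 2 φ 0) * (starRingEnd ℂ) (φ 0)).re := by
  obtain ⟨hsm, hode⟩ := h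
  have h3 : ContDiff ℝ ((2:ℕ) + 1) φ := by exact_mod_cast hsm
  rw [contDiff_succ_iff_deriv] at h3
  have h2 : ContDiff ℝ ((1:ℕ) + 1) (deriv φ) := by exact_mod_cast h3.2.2
  rw [contDiff_succ_iff_deriv] at h2
  have h1 : ContDiff ℝ ((0:ℕ) + 1) (deriv (deriv φ)) := by exact_mod_cast h2.2.2
  rw [contDiff_succ_iff_deriv] at h1
  have hdφ : Differentiable ℝ φ := h3.1
  have hd1 : Differentiable ℝ (deriv φ) := h2.1
  have hd2 : Differentiable ℝ (deriv (deriv φ)) := h1.1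
  have hiter2 : iteratedDeriv 2 φ = deriv (deriv φ) := by
    rw [show (2:ℕ) = 1 + 1 from rfl, iteratedDeriv_succ, iteratedDeriv_one]
  have hiter3 : iteratedDeriv 3 φ = deriv (deriv (deriv φ)) := by
    rw [show (3:ℕ) = 2 + 1 from rfl, iteratedDeriv_succ, hiter2]
  set Q : ℝ → ℝ := fun x => (φ x * (starRingEnd ℂ) (φ x)).re
      - (deriv φ x * (starRingEnd ℂ) (deriv φ x)).re
      + 2*((deriv (deriv φ) x) * (starRingEnd ℂ) (φ x)).re with hQ
  have hQcont : Continuous Q := by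
    apply Continuous.add
    · apply Continuous.sub
      · exact Complex.continuous_re.comp (hdφ.continuous.mul hdφ.continuous.star)
      · exact Complex.continuous_re.comp (hd1.continuous.mul hd1.continuous.star)
    · exact continuous_const.mul
        (Complex.continuous_re.comp (hd2.continuous.mul hdφ.continuous.star))
  have hQ' : ∀ t ∈ Ico (0:ℝ) L, HasDerivWithinAt Q 0 (Ici t) t := by
    intro t ht
    have hode' := hode t ⟨ht.1, ht.2.le⟩
    rw [hiter3] at hode'
    have hval : deriv (deriv (deriv φ)) t = -lam * φ t - deriv φ t := by linear_combination hode'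
    have hp := (hdφ t).hasDerivAt
    have hp1 := (hd1 t).hasDerivAt
    have hp2 := (hd2 t).hasDerivAt
    have hp2' : HasDerivAt (deriv (deriv φ)) (-lam * φ t - deriv φ t) t := hval ▸ hp2
    have hT := ((hasDerivAt_mulconj hp hp).sub (hasDerivAt_mulconj hp1 hp1)).add
      (((hasDerivAt_mulconj hp2' hp).const_mul (2:ℝ)))
    have hzero : (deriv φ t * (starRingEnd ℂ) (φ t) + φ t * (starRingEnd ℂ) (deriv φ t)).re
        - (deriv (deriv φ) t * (starRingEnd ℂ) (deriv φ t)
            + deriv φ t * (starRingEnd ℂ) (deriv (deriv φ) t)).re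
        + 2 * ((-lam * φ t - deriv φ t) * (starRingEnd ℂ) (φ t)
            + deriv (deriv φ) t * (starRingEnd ℂ) (deriv φ t)).re = 0 := by
      simp [Complex.mul_re, Complex.add_re, Complex.sub_re, Complex.sub_im, Complex.mul_im,
        Complex.add_im, hre]
      ring
    rw [hzero] at hT
    exact hT.hasDerivWithinAt
  have := constant_of_has_deriv_right_zero hQcont.continuousOn hQ' L ⟨hL, le_refl L⟩
  rw [hiter2]
  simpa [hQ] using this

end

end KdVAux

open KdVAux Set Complex in
theorem stmt3 (L : ℝ) (hL : 0 < L) (ςNe ςDi : ℝ) (hNe : 0 < ςNe) (hDi : 0 < ςDi)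
    (lam : ℂ)
    (hroot : ∃ μ₀ : ℂ, μ₀ ^ 3 + μ₀ + lam = 0 ∧ 3 * μ₀ ^ 2 + 1 = 0)
    (φ₁ φ₂ : ℝ → ℂ)
    (h1 : KdVSpectralODE lam L φ₁) (h2 : KdVSpectralODE lam L φ₂)
    (hb0 : φ₂ 0 = φ₁ 0)
    (hb1 : (ςNe : ℂ) * iteratedDeriv 2 φ₁ 0 + (ςDi : ℂ) * iteratedDeriv 2 φ₂ 0 = 0)
    (hb2 : φ₁ L = 0) (hb3 : φ₂ L = 0)
    (hb4 : deriv φ₁ 0 = 0) (hb5 : deriv φ₂ 0 = 0)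
    (hb6 : deriv φ₁ L = 0) (hb7 : iteratedDeriv 2 φ₂ L = 0) :
    ∀ x ∈ Set.Icc (0 : ℝ) L, φ₁ x = 0 ∧ φ₂ x = 0 := by
  obtain ⟨μ, hlamroot, hμ0⟩ := hroot
  have hμ : 3*μ^2 + 1 = 0 := by linear_combination hμ0
  obtain ⟨hre, him2⟩ := mu_re_im hμ
  have hlamre : lam.re = 0 := by
    have h := congrArg Complex.re hlamroot
    simp [pow_succ, pow_two, Complex.mul_re, Complex.mul_im, Complex.add_re, hre] at h
    linarith
  have E1 := energy hlamre hL.le φ₁ h1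
  have E2 := energy hlamre hL.le φ₂ h2
  set a := φ₁ 0 with ha
  set q1 := iteratedDeriv 2 φ₁ 0 with hq1
  set q2 := iteratedDeriv 2 φ₂ 0 with hq2
  rw [hb2, hb4, hb6] at E1
  rw [hb3, hb5, hb7, hb0] at E2
  simp only [map_zero, mul_zero, zero_mul, Complex.zero_re, zero_sub, zero_add, sub_zero,
    add_zero, neg_zero] at E1 E2
  -- E1 : 0 = (a * conj a).re + 2*(q1 * conj a).re
  -- E2 : -(deriv φ₂ L * conj (deriv φ₂ L)).re = (a * conj a).re + 2*(q2 * conj a).re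
  have hN : (a * (starRingEnd ℂ) a).re = Complex.normSq a := by
    rw [Complex.mul_conj]; simp
  have hD : (deriv φ₂ L * (starRingEnd ℂ) (deriv φ₂ L)).re = Complex.normSq (deriv φ₂ L) := by
    rw [Complex.mul_conj]; simp
  have hcross : ςNe * (q1 * (starRingEnd ℂ) a).re + ςDi * (q2 * (starRingEnd ℂ) a).re = 0 := by
    have h0 : ((((ςNe:ℂ))*q1 + ((ςDi:ℂ))*q2) * (starRingEnd ℂ) a).re = 0 := by
      rw [hb1]; simp
    rw [add_mul, Complex.add_re, mul_assoc, mul_assoc, Complex.re_ofReal_mul,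
      Complex.re_ofReal_mul] at h0
    exact h0
  have hNnn := Complex.normSq_nonneg a
  have hDnn := Complex.normSq_nonneg (deriv φ₂ L)
  have ha0 : a = 0 := by
    rw [← Complex.normSq_eq_zero]
    nlinarith [E1, E2, hcross, hN, hD]
  have hφ10 : φ₁ 0 = 0 := ha0
  have hφ20 : φ₂ 0 = 0 := by rw [hb0]; exact ha0
  have R1 := reprW hμ hlamroot φ₁ h1 hφ10 hb4
  have R2 := reprW hμ hlamroot φ₂ h2 hφ20 hb5
  have hWL := WL_ne hμ hL
  have hmem : L ∈ Icc (0:ℝ) L := ⟨hL.le, le_refl L⟩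
  have hq1z : q1 = 0 := by
    have := R1 L hmem
    rw [hb2] at this
    rcases mul_eq_zero.1 this.symm with h | h
    · exact h
    · exact absurd h hWL
  have hq2z : q2 = 0 := by
    have := R2 L hmem
    rw [hb3] at this
    rcases mul_eq_zero.1 this.symm with h | h
    · exact h
    · exact absurd h hWL
  intro x hx
  constructor
  · rw [R1 x hx, ← hq1, hq1z, zero_mul]
  · rw [R2 x hx, ← hq2, hq2z, zero_mul]
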